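/- arXiv:2007.11397 — 3 statements merged into one kernel-verified Lean document; each statement's English description precedes it below -/
import Mathlib

section
/- Let X be a compact metric space and T a ξ-regular structure tree of X with constant α₀ > 0, i.e., every vertex of level k has diameter at most α₀ ξ^k and any two distinct vertices of level k are at distance at least α₀⁻¹ ξ^k, and every vertex is the union of its direct offsprings. Then the map sending each infinite path (v_k) in ∂T to the unique point in ⋂_k v_k is a bi-Lipschitz bijection from (∂T, d_ξ) to X; in particular X is Lipschitz equivalent to (∂T, d_ξ). -/
open Set

private lemma exists_path_aux {X : Type*} (vert : ℕ → Set (Set X)) (x : X)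
    (h0 : (Set.univ : Set X) ∈ vert 0)
    (hstep : ∀ k (A : Set X), A ∈ vert k → x ∈ A →
      ∃ B, B ∈ vert (k + 1) ∧ B ⊆ A ∧ x ∈ B) :
    ∃ u : ℕ → Set X, (∀ k, u k ∈ vert k) ∧ (∀ k, u (k + 1) ⊆ u k) ∧ ∀ k, x ∈ u k := by
  let F : (k : ℕ) → {A : Set X // A ∈ vert k ∧ x ∈ A} :=
    fun k => Nat.rec ⟨Set.univ, h0, Set.mem_univ x⟩
      (fun k p => ⟨(hstep k p.1 p.2.1 p.2.2).choose,
        (hstep k p.1 p.2.1 p.2.2).choose_spec.1,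
        (hstep k p.1 p.2.1 p.2.2).choose_spec.2.2⟩) k
  refine ⟨fun k => (F k).1, fun k => (F k).2.1, fun k => ?_, fun k => (F k).2.2⟩
  exact (hstep k (F k).1 (F k).2.1 (F k).2.2).choose_spec.2.1

/-- **Regular structure trees give bi-Lipschitz models.**
Let `X` be a compact metric space and let `vert k` be the collection of vertices
(closed subsets of `X`) of level `k` of a structure tree of `X`: the root is `X`,
vertices of the same level are disjoint, each vertex has finitely many (at least one)
direct offsprings and equals the union of its direct offsprings.  If the tree is
`ξ`-regular with constant `α₀` (level-`k` vertices have diameter `≤ α₀ ξ^k` and are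
`≥ α₀⁻¹ ξ^k` separated), then the map sending an infinite path `(v_k)` of the tree to
the unique point of `⋂ v_k` is a bi-Lipschitz bijection from `(∂T, d_ξ)` onto `X`. -/
theorem structureTree_regular_biLipschitz
    {X : Type*} [MetricSpace X] [CompactSpace X]
    (vert : ℕ → Set (Set X))
    (hroot : vert 0 = {Set.univ})
    (hclosed : ∀ k, ∀ A ∈ vert k, IsClosed A)
    (hne : ∀ k, ∀ A ∈ vert k, A.Nonempty)
    (hdisj : ∀ k, (vert k).Pairwise fun A B => Disjoint A B)
    (hfin : ∀ k, ∀ A ∈ vert k, {B ∈ vert (k + 1) | B ⊆ A}.Finite)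
    (hoff : ∀ k, ∀ A ∈ vert k, ∃ B ∈ vert (k + 1), B ⊆ A)
    (hcover : ∀ k, ∀ A ∈ vert k, A = ⋃₀ {B ∈ vert (k + 1) | B ⊆ A})
    (ξ α₀ : ℝ) (hξ0 : 0 < ξ) (hξ1 : ξ < 1) (hα : 0 < α₀)
    (hdiam : ∀ k, ∀ A ∈ vert k, Metric.diam A ≤ α₀ * ξ ^ k)
    (hsep : ∀ k, ∀ A ∈ vert k, ∀ B ∈ vert k, A ≠ B →
      ∀ a ∈ A, ∀ b ∈ B, α₀⁻¹ * ξ ^ k ≤ dist a b) :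
    ∃ f : {u : ℕ → Set X // (∀ k, u k ∈ vert k) ∧ ∀ k, u (k + 1) ⊆ u k} → X,
      (∀ u, ∀ k, f u ∈ u.1 k) ∧ Function.Bijective f ∧
      ∃ C : ℝ, 0 < C ∧ ∀ u v, u ≠ v →
        C⁻¹ * ξ ^ sInf {k : ℕ | u.1 k ≠ v.1 k} ≤ dist (f u) (f v) ∧
        dist (f u) (f v) ≤ C * ξ ^ sInf {k : ℕ | u.1 k ≠ v.1 k} := by
  have huniv : (Set.univ : Set X) ∈ vert 0 := by rw [hroot]; rfl
  -- distances within a vertex of level k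
  have hdiam_pt : ∀ k, ∀ A ∈ vert k, ∀ x ∈ A, ∀ y ∈ A, dist x y ≤ α₀ * ξ ^ k := by
    intro k A hA x hx y hy
    have hb : Bornology.IsBounded A :=
      ((hclosed k A hA).isCompact).isBounded
    exact (Metric.dist_le_diam_of_mem hb hx hy).trans (hdiam k A hA)
  -- two points lying in a common vertex at every level coincide
  have hzero : ∀ x y : X, (∀ k, ∃ A ∈ vert k, x ∈ A ∧ y ∈ A) → x = y := by
    intro x y h
    have hle : ∀ k, dist x y ≤ α₀ * ξ ^ k := by
      intro k
      obtain ⟨A, hA, hx, hy⟩ := h k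
      exact hdiam_pt k A hA x hx y hy
    have htend : Filter.Tendsto (fun k : ℕ => α₀ * ξ ^ k) Filter.atTop (nhds 0) := by
      have := (tendsto_pow_atTop_nhds_zero_of_lt_one hξ0.le hξ1).const_mul α₀
      simpa using this
    have : dist x y ≤ 0 := ge_of_tendsto' htend hle
    exact dist_le_zero.mp this
  -- the point of a path
  have hnonempty : ∀ u : {u : ℕ → Set X // (∀ k, u k ∈ vert k) ∧ ∀ k, u (k + 1) ⊆ u k},
      (⋂ k, u.1 k).Nonempty := fun u =>
    IsCompact.nonempty_iInter_of_sequence_nonempty_isCompact_isClosed u.1 u.2.2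
      (fun k => hne k _ (u.2.1 k)) ((hclosed 0 _ (u.2.1 0)).isCompact)
      (fun k => hclosed k _ (u.2.1 k))
  choose f hf using hnonempty
  have hmem : ∀ u, ∀ k, f u ∈ u.1 k := fun u k => Set.mem_iInter.mp (hf u) k
  -- the set of disagreement levels
  have hS : ∀ u v : {u : ℕ → Set X // (∀ k, u k ∈ vert k) ∧ ∀ k, u (k + 1) ⊆ u k},
      u ≠ v → {k : ℕ | u.1 k ≠ v.1 k}.Nonempty := by
    intro u v huv
    by_contra h
    rw [Set.not_nonempty_iff_eq_empty] at h
    apply huv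
    apply Subtype.ext
    funext k
    by_contra hk
    exact absurd (Set.eq_empty_iff_forall_notMem.mp h k) (by simpa using hk)
  have hq_pos : ∀ u v : {u : ℕ → Set X // (∀ k, u k ∈ vert k) ∧ ∀ k, u (k + 1) ⊆ u k},
      u ≠ v → 0 < sInf {k : ℕ | u.1 k ≠ v.1 k} := by
    intro u v huv
    rcases Nat.eq_zero_or_pos (sInf {k : ℕ | u.1 k ≠ v.1 k}) with h | h
    swap
    · exact h
    · exfalso
      have h0 : 0 ∈ {k : ℕ | u.1 k ≠ v.1 k} := h ▸ Nat.sInf_mem (hS u v huv)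
      have hu0 : u.1 0 = Set.univ := by have := u.2.1 0; rwa [hroot] at this
      have hv0 : v.1 0 = Set.univ := by have := v.2.1 0; rwa [hroot] at this
      exact h0 (hu0.trans hv0.symm)
  -- lower bound
  have hlow : ∀ u v, u ≠ v →
      α₀⁻¹ * ξ ^ sInf {k : ℕ | u.1 k ≠ v.1 k} ≤ dist (f u) (f v) := by
    intro u v huv
    set q := sInf {k : ℕ | u.1 k ≠ v.1 k} with hq
    have hqmem : u.1 q ≠ v.1 q := Nat.sInf_mem (hS u v huv)
    exact hsep q _ (u.2.1 q) _ (v.2.1 q) hqmem _ (hmem u q) _ (hmem v q)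
  have hinj : Function.Injective f := by
    intro u v h
    by_contra huv
    have h1 := hlow u v huv
    rw [h, dist_self] at h1
    have h2 : 0 < α₀⁻¹ * ξ ^ sInf {k : ℕ | u.1 k ≠ v.1 k} :=
      mul_pos (inv_pos.mpr hα) (pow_pos hξ0 _)
    linarith
  have hsurj : Function.Surjective f := by
    intro x
    have hstep : ∀ k (A : Set X), A ∈ vert k → x ∈ A →
        ∃ B, B ∈ vert (k + 1) ∧ B ⊆ A ∧ x ∈ B := by
      intro k A hA hx
      have hx' : x ∈ ⋃₀ {B ∈ vert (k + 1) | B ⊆ A} := (hcover k A hA) ▸ hx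
      obtain ⟨B, ⟨hB1, hB2⟩, hxB⟩ := hx'
      exact ⟨B, hB1, hB2, hxB⟩
    obtain ⟨w, hw1, hw2, hw3⟩ := exists_path_aux vert x huniv hstep
    refine ⟨⟨w, hw1, hw2⟩, ?_⟩
    exact hzero _ _ (fun k => ⟨w k, hw1 k, hmem ⟨w, hw1, hw2⟩ k, hw3 k⟩)
  refine ⟨f, hmem, ⟨hinj, hsurj⟩, α₀ / ξ, div_pos hα hξ0, ?_⟩
  intro u v huv
  set q := sInf {k : ℕ | u.1 k ≠ v.1 k} with hq
  constructor
  · refine le_trans ?_ (hlow u v huv)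
    have h1 : (α₀ / ξ)⁻¹ ≤ α₀⁻¹ := by
      rw [inv_div, div_eq_mul_inv]
      nth_rewrite 2 [← one_mul α₀⁻¹]
      exact mul_le_mul_of_nonneg_right hξ1.le (inv_nonneg.mpr hα.le)
    exact mul_le_mul_of_nonneg_right h1 (pow_nonneg hξ0.le q)
  · obtain ⟨m, hm⟩ : ∃ m, q = m + 1 :=
      ⟨q - 1, by have := hq_pos u v huv; omega⟩
    have hmnot : m ∉ {k : ℕ | u.1 k ≠ v.1 k} := Nat.notMem_of_lt_sInf (by omega)
    have heq : u.1 m = v.1 m := by simpa using hmnot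
    have hfv : f v ∈ u.1 m := heq ▸ hmem v m
    have hd : dist (f u) (f v) ≤ α₀ * ξ ^ m :=
      hdiam_pt m _ (u.2.1 m) _ (hmem u m) _ hfv
    calc dist (f u) (f v) ≤ α₀ * ξ ^ m := hd
      _ = α₀ / ξ * ξ ^ (m + 1) := by field_simp; ring
      _ = α₀ / ξ * ξ ^ q := by rw [hm]
end

section
/- Let S and T be rooted trees (each vertex having finitely many, at least one, direct offsprings) and suppose there exists a bundle map Δ from S to T. Then for every ξ ∈ (0,1), the boundaries (∂S, d_ξ) and (∂T, d_ξ) are Lipschitz equivalent, with a bi-Lipschitz bijection whose constant can be taken to be 1/ξ. -/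
/- **Bundle maps give bi-Lipschitz equivalence of boundaries.**
Trees `S`, `T` are modelled by level sets `VS k`, `VT k` (finite, with unique roots)
and parent maps; every vertex has at least one direct offspring.  A bundle map `Δ`
assigns to each level-`k` vertex `u` of `S` a nonempty set `Δ k u` of level-`k`
vertices of `T` sharing the same parent, so that these sets partition the level-`k`
vertices of `T` and respect the offspring relation.  Then the boundaries with the
prefix metrics `d_ξ` are bi-Lipschitz equivalent, with constant `1/ξ`. -/
open Classical in
theorem bundleMap_boundary_biLipschitz
    (VS VT : ℕ → Type*) [∀ k, Finite (VS k)] [∀ k, Finite (VT k)]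
    [Unique (VS 0)] [Unique (VT 0)]
    (parS : ∀ k, VS (k + 1) → VS k) (parT : ∀ k, VT (k + 1) → VT k)
    (hSoff : ∀ k, ∀ v : VS k, ∃ w, parS k w = v)
    (hToff : ∀ k, ∀ v : VT k, ∃ w, parT k w = v)
    (Δ : ∀ k, VS k → Set (VT k))
    (hne : ∀ k, ∀ u : VS k, (Δ k u).Nonempty)
    (hbundle : ∀ k, ∀ u : VS (k + 1), ∀ w ∈ Δ (k + 1) u, ∀ w' ∈ Δ (k + 1) u,
      parT k w = parT k w')
    (hpart : ∀ k, ∀ w : VT k, ∃! u : VS k, w ∈ Δ k u)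
    (hoffspring : ∀ k, ∀ u' : VS (k + 1), ∀ w' ∈ Δ (k + 1) u',
      parT k w' ∈ Δ k (parS k u'))
    (ξ : ℝ) (hξ0 : 0 < ξ) (hξ1 : ξ < 1) :
    ∃ f : {u : ∀ k, VS k // ∀ k, parS k (u (k + 1)) = u k} →
        {w : ∀ k, VT k // ∀ k, parT k (w (k + 1)) = w k},
      Function.Bijective f ∧
      ∀ u v, ξ * (if u = v then (0 : ℝ) else ξ ^ sInf {k : ℕ | u.1 k ≠ v.1 k})
          ≤ (if f u = f v then (0 : ℝ) else ξ ^ sInf {k : ℕ | (f u).1 k ≠ (f v).1 k}) ∧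
        (if f u = f v then (0 : ℝ) else ξ ^ sInf {k : ℕ | (f u).1 k ≠ (f v).1 k})
          ≤ ξ⁻¹ * (if u = v then (0 : ℝ) else ξ ^ sInf {k : ℕ | u.1 k ≠ v.1 k}) := by
  classical
  -- the common parent of the bundle of a level-(k+1) vertex
  let P : ∀ k, VS (k + 1) → VT k := fun k u' => parT k (hne (k + 1) u').choose
  have hPmem : ∀ k (u' : VS (k + 1)), P k u' ∈ Δ k (parS k u') := fun k u' =>
    hoffspring k u' _ (hne (k + 1) u').choose_spec
  have hinj : ∀ k (a b : VS k) (x : VT k), x ∈ Δ k a → x ∈ Δ k b → a = b :=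
    fun k a b x ha hb => ((hpart k x).unique ha hb)
  have hmem : ∀ (u : {u : ∀ k, VS k // ∀ k, parS k (u (k + 1)) = u k}) k,
      P k (u.1 (k + 1)) ∈ Δ k (u.1 k) := fun u k => by
    have := hPmem k (u.1 (k + 1)); rwa [u.2 k] at this
  have hcons : ∀ (u : {u : ∀ k, VS k // ∀ k, parS k (u (k + 1)) = u k}) k,
      parT k (P (k + 1) (u.1 (k + 2))) = P k (u.1 (k + 1)) := by
    intro u k
    have h1 : P (k + 1) (u.1 (k + 2)) ∈ Δ (k + 1) (u.1 (k + 1)) := by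
      have := hPmem (k + 1) (u.1 (k + 2)); rwa [u.2 (k + 1)] at this
    exact hbundle k (u.1 (k + 1)) _ h1 _ (hne (k + 1) (u.1 (k + 1))).choose_spec
  let F : {u : ∀ k, VS k // ∀ k, parS k (u (k + 1)) = u k} →
      {w : ∀ k, VT k // ∀ k, parT k (w (k + 1)) = w k} :=
    fun u => ⟨fun k => P k (u.1 (k + 1)), hcons u⟩
  have hFinj : Function.Injective F := by
    intro u v huv
    have h : ∀ k, P k (u.1 (k + 1)) = P k (v.1 (k + 1)) := fun k =>
      congrFun (congrArg Subtype.val huv) k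
    exact Subtype.ext (funext fun k => hinj k _ _ _ (hmem u k) (h k ▸ hmem v k))
  refine ⟨F, ⟨hFinj, ?_⟩, ?_⟩
  · -- surjectivity
    intro w
    have hu : ∀ k, (w.1 k ∈ Δ k ((hpart k (w.1 k)).choose)) := fun k =>
      (hpart k (w.1 k)).choose_spec.1
    have hpath : ∀ k, parS k ((hpart (k + 1) (w.1 (k + 1))).choose)
        = (hpart k (w.1 k)).choose := by
      intro k
      have h1 : parT k (w.1 (k + 1)) ∈
          Δ k (parS k ((hpart (k + 1) (w.1 (k + 1))).choose)) :=
        hoffspring k _ _ (hu (k + 1))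
      rw [w.2 k] at h1
      exact hinj k _ _ _ h1 (hu k)
    refine ⟨⟨fun k => (hpart k (w.1 k)).choose, hpath⟩, ?_⟩
    refine Subtype.ext (funext fun k => ?_)
    show P k ((hpart (k + 1) (w.1 (k + 1))).choose) = w.1 k
    have h3 := hbundle k ((hpart (k + 1) (w.1 (k + 1))).choose)
      _ (hne (k + 1) ((hpart (k + 1) (w.1 (k + 1))).choose)).choose_spec
      _ (hu (k + 1))
    exact h3.trans (w.2 k)
  · -- metric estimates
    intro u v
    by_cases huv : u = v
    · subst huv; simp
    · have hfne : F u ≠ F v := fun h => huv (hFinj h)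
      rw [if_neg huv, if_neg hfne]
      have hAne : {k : ℕ | u.1 k ≠ v.1 k}.Nonempty := by
        by_contra h
        push_neg at h
        simp only [Set.not_nonempty_iff_eq_empty, Set.eq_empty_iff_forall_notMem,
          Set.mem_setOf_eq, not_not] at h
        exact huv (Subtype.ext (funext h))
      set m := sInf {k : ℕ | u.1 k ≠ v.1 k} with hm
      set m' := sInf {k : ℕ | (F u).1 k ≠ (F v).1 k} with hm'
      have hmmem : u.1 m ≠ v.1 m := Nat.sInf_mem hAne
      have hlt : ∀ j < m, u.1 j = v.1 j := fun j hj =>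
        not_not.mp (fun hc => absurd (Nat.sInf_le hc) (Nat.lt_irrefl j ∘ (Nat.lt_of_lt_of_le hj)))
      -- m ∈ B, so m' ≤ m
      have hmB : (F u).1 m ≠ (F v).1 m := by
        intro h
        replace h : P m (u.1 (m + 1)) = P m (v.1 (m + 1)) := h
        exact hmmem (hinj m _ _ _ (hmem u m) (by rw [h]; exact hmem v m))
      have h1 : m' ≤ m := Nat.sInf_le hmB
      -- m ≤ m' + 1
      have hm'mem : (F u).1 m' ≠ (F v).1 m' := Nat.sInf_mem (⟨m, hmB⟩ : {k : ℕ | (F u).1 k ≠ (F v).1 k}.Nonempty)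
      have h2 : m ≤ m' + 1 := by
        refine Nat.sInf_le ?_
        intro h
        exact hm'mem (congrArg (P m') h)
      have hξ0' : (0:ℝ) ≤ ξ := hξ0.le
      have hξ1' : ξ ≤ 1 := hξ1.le
      constructor
      · calc ξ * ξ ^ m ≤ 1 * ξ ^ m := by
              apply mul_le_mul_of_nonneg_right hξ1' (pow_nonneg hξ0' m)
          _ = ξ ^ m := one_mul _
          _ ≤ ξ ^ m' := pow_le_pow_of_le_one hξ0' hξ1' h1
      · have h3 : ξ ^ (m' + 1) ≤ ξ ^ m := pow_le_pow_of_le_one hξ0' hξ1' h2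
        calc ξ ^ m' = ξ⁻¹ * ξ ^ (m' + 1) := by
              rw [pow_succ]; field_simp
          _ ≤ ξ⁻¹ * ξ ^ m := by
              apply mul_le_mul_of_nonneg_left h3 (inv_nonneg.mpr hξ0')
end

section
/- With 𝒟, ℰ, N, s, ℓ as in the uniform-horizontal-fibers setting, for every k ≥ 0 each approximate square of rank k has exactly N·s^{ℓ(k+1)−ℓ(k)−1} direct offsprings (approximate squares of rank k+1 contained in it), regardless of whether ℓ(k) > k or ℓ(k) = k. -/
/-- **Number of direct offsprings of an approximate square.**
With `𝒟, ℰ, N, s, ℓ` as in the uniform-horizontal-fibers setting, every approximate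
square of rank `k` (a pair of words `(x, y)` with `(x_j, y_j) ∈ 𝒟` for `j ≤ k` and
`y_j ∈ ℰ` for `j > k`) has exactly `N·s^{ℓ(k+1)−ℓ(k)−1}` direct offsprings, i.e.
approximate squares of rank `k+1` extending it, regardless of whether `ℓ(k) > k`
or `ℓ(k) = k`. -/
theorem card_direct_offsprings (n m : ℕ) (hm : 2 ≤ m) (hmn : m < n)
    (D : Finset (Fin n × Fin m)) (hN : 1 < D.card)
    (E : Finset (Fin m)) (hE : E = D.image Prod.snd)
    (s : ℕ) (hs : s = E.card)
    (hunif : ∀ j ∈ E, (D.filter fun d => d.2 = j).card * s = D.card)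
    (ℓ : ℕ → ℕ) (hℓ : ∀ k, ℓ k = ⌊(k : ℝ) * Real.log n / Real.log m⌋₊)
    (k : ℕ) (x : Fin k → Fin n) (y : Fin (ℓ k) → Fin m)
    (hxy : ∀ j : Fin (ℓ k), if h : (j : ℕ) < k then (x ⟨j, h⟩, y j) ∈ D else y j ∈ E) :
    Nat.card {p : (Fin (k + 1) → Fin n) × (Fin (ℓ (k + 1)) → Fin m) //
        (∀ j : Fin (ℓ (k + 1)),
          if h : (j : ℕ) < k + 1 then (p.1 ⟨j, h⟩, p.2 j) ∈ D else p.2 j ∈ E) ∧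
        (∀ j : Fin (k + 1), ∀ h : (j : ℕ) < k, p.1 j = x ⟨j, h⟩) ∧
        (∀ j : Fin (ℓ (k + 1)), ∀ h : (j : ℕ) < ℓ k, p.2 j = y ⟨j, h⟩)}
      = D.card * s ^ (ℓ (k + 1) - ℓ k - 1) := by
  -- basic facts about ℓ
  have hm1 : (1 : ℝ) < (m : ℝ) := by exact_mod_cast Nat.lt_of_lt_of_le one_lt_two hm
  have hlogm : 0 < Real.log m := Real.log_pos hm1
  have hr : (1 : ℝ) ≤ Real.log n / Real.log m :=
    (one_le_div hlogm).mpr (Real.log_le_log (by positivity) (by exact_mod_cast hmn.le))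
  have hkL : k ≤ ℓ k := by
    rw [hℓ]
    apply Nat.le_floor
    rw [mul_div_assoc]
    calc (k : ℝ) = k * 1 := by ring
    _ ≤ k * (Real.log n / Real.log m) := by
        apply mul_le_mul_of_nonneg_left hr (by positivity)
  have hLL : ℓ k + 1 ≤ ℓ (k + 1) := by
    rw [hℓ, hℓ]
    apply Nat.le_floor
    have h1 : (⌊(k : ℝ) * Real.log n / Real.log m⌋₊ : ℝ)
        ≤ (k : ℝ) * (Real.log n / Real.log m) := by
      rw [← mul_div_assoc]
      exact Nat.floor_le (by positivity)
    push_cast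
    rw [show ((k:ℝ)+1) * Real.log n / Real.log m
        = (k:ℝ) * (Real.log n / Real.log m) + Real.log n / Real.log m from by ring]
    linarith [h1, hr]
  rcases lt_or_eq_of_le hkL with hlt | he
  · -- case k < ℓ k
    have hyk : y ⟨k, hlt⟩ ∈ E := by
      have := hxy ⟨k, hlt⟩
      rwa [dif_neg (lt_irrefl k)] at this
    trans Nat.card (↥(D.filter fun d => d.2 = y ⟨k, hlt⟩) × (Fin (ℓ (k + 1) - ℓ k) → ↥E))
    · apply Nat.card_congr
      refine ⟨fun p => (⟨(p.1.1 ⟨k, by omega⟩, y ⟨k, hlt⟩), ?_⟩,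
          fun i => ⟨p.1.2 ⟨ℓ k + i, by omega⟩, ?_⟩),
        fun q => ⟨(fun j => if h : (j : ℕ) < k then x ⟨j, h⟩ else q.1.1.1,
                   fun j => if h : (j : ℕ) < ℓ k then y ⟨j, h⟩
                            else (q.2 ⟨(j : ℕ) - ℓ k, by omega⟩ : Fin m)), ?_, ?_, ?_⟩,
        ?_, ?_⟩
      · -- membership in filter
        have h1 := p.2.1 ⟨k, by omega⟩
        rw [dif_pos (by omega : k < k + 1)] at h1
        have h3 := p.2.2.2 ⟨k, by omega⟩ hlt
        rw [Finset.mem_filter]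
        rw [h3] at h1
        exact ⟨h1, rfl⟩
      · -- z i ∈ E
        have h1 := p.2.1 ⟨ℓ k + i, by omega⟩
        rwa [dif_neg (by omega : ¬ (ℓ k + (i : ℕ) < k + 1))] at h1
      · -- invFun condition 1
        intro j
        by_cases hj : (j : ℕ) < k + 1
        · rw [dif_pos hj]
          dsimp only
          by_cases hj2 : (j : ℕ) < k
          · rw [dif_pos hj2, dif_pos (by omega : (j : ℕ) < ℓ k)]
            have := hxy ⟨j, by omega⟩
            rwa [dif_pos hj2] at this
          · have hjk : (j : ℕ) = k := by omega
            rw [dif_neg hj2, dif_pos (by omega : (j : ℕ) < ℓ k)]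
            have hq := q.1.2
            rw [Finset.mem_filter] at hq
            have : (⟨(j : ℕ), by omega⟩ : Fin (ℓ k)) = ⟨k, hlt⟩ := by
              exact Fin.ext hjk
            rw [this]
            rw [show ((q.1 : Fin n × Fin m).1, y ⟨k, hlt⟩) = (q.1 : Fin n × Fin m) from
              Prod.ext rfl hq.2.symm]
            exact hq.1
        · rw [dif_neg hj]
          dsimp only
          by_cases hj2 : (j : ℕ) < ℓ k
          · rw [dif_pos hj2]
            have := hxy ⟨j, hj2⟩
            rwa [dif_neg (by omega : ¬ (j : ℕ) < k)] at this
          · rw [dif_neg hj2]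
            exact (q.2 ⟨(j : ℕ) - ℓ k, by omega⟩).2
      · -- invFun condition 2
        intro j h
        exact dif_pos h
      · -- invFun condition 3
        intro j h
        exact dif_pos h
      · -- left inverse
        intro p
        apply Subtype.ext
        dsimp only
        refine Prod.ext (funext fun j => ?_) (funext fun j => ?_)
        · by_cases hj : (j : ℕ) < k
          · simp only [dif_pos hj]
            exact (p.2.2.1 j hj).symm
          · simp only [dif_neg hj]
            exact congrArg _ (Fin.ext (show k = (j : ℕ) by omega) :
              (⟨k, by omega⟩ : Fin (k + 1)) = j)
        · by_cases hj : (j : ℕ) < ℓ k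
          · simp only [dif_pos hj]
            exact (p.2.2.2 j hj).symm
          · simp only [dif_neg hj]
            exact congrArg _ (Fin.ext (show ℓ k + ((j : ℕ) - ℓ k) = (j : ℕ) by omega) :
              (⟨ℓ k + ((j : ℕ) - ℓ k), by omega⟩ : Fin (ℓ (k + 1))) = j)
      · -- right inverse
        intro q
        refine Prod.ext (Subtype.ext (Prod.ext ?_ ?_)) (funext fun i => Subtype.ext ?_)
        · simp only [dif_neg (lt_irrefl k)]
        · exact (Finset.mem_filter.mp q.1.2).2.symm
        · simp only [dif_neg (by omega : ¬ ℓ k + (i : ℕ) < ℓ k)]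
          exact congrArg (fun t => ((q.2 t : Fin m)))
            (Fin.ext (show ℓ k + (i : ℕ) - ℓ k = (i : ℕ) by omega) :
            (⟨ℓ k + (i : ℕ) - ℓ k, by omega⟩ : Fin (ℓ (k + 1) - ℓ k)) = i)
    · rw [Nat.card_prod, Nat.card_eq_finsetCard, Nat.card_fun, Nat.card_eq_finsetCard,
        Nat.card_eq_fintype_card, Fintype.card_fin, ← hs]
      have hu := hunif _ hyk
      have hΔ : ℓ (k + 1) - ℓ k = (ℓ (k + 1) - ℓ k - 1) + 1 := by omega
      rw [hΔ, pow_succ]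
      calc (D.filter fun d => d.2 = y ⟨k, hlt⟩).card * (s ^ (ℓ (k + 1) - ℓ k - 1) * s)
          = ((D.filter fun d => d.2 = y ⟨k, hlt⟩).card * s) * s ^ (ℓ (k + 1) - ℓ k - 1) := by ring
        _ = D.card * s ^ (ℓ (k + 1) - ℓ k - 1) := by rw [hu]
  · -- case k = ℓ k
    trans Nat.card (↥D × (Fin (ℓ (k + 1) - k - 1) → ↥E))
    · apply Nat.card_congr
      refine ⟨fun p => (⟨(p.1.1 ⟨k, by omega⟩, p.1.2 ⟨k, by omega⟩), ?_⟩,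
          fun i => ⟨p.1.2 ⟨k + 1 + i, by omega⟩, ?_⟩),
        fun q => ⟨(fun j => if h : (j : ℕ) < k then x ⟨j, h⟩ else (q.1 : Fin n × Fin m).1,
                   fun j => if h : (j : ℕ) < k then y ⟨j, by omega⟩
                            else if h2 : (j : ℕ) = k then (q.1 : Fin n × Fin m).2
                            else (q.2 ⟨(j : ℕ) - k - 1, by omega⟩ : Fin m)), ?_, ?_, ?_⟩,
        ?_, ?_⟩
      · have h1 := p.2.1 ⟨k, by omega⟩
        rwa [dif_pos (by omega : k < k + 1)] at h1
      · have h1 := p.2.1 ⟨k + 1 + i, by omega⟩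
        rwa [dif_neg (by omega : ¬ (k + 1 + (i : ℕ) < k + 1))] at h1
      · -- invFun condition 1
        intro j
        by_cases hj : (j : ℕ) < k + 1
        · rw [dif_pos hj]
          dsimp only
          by_cases hj2 : (j : ℕ) < k
          · simp only [dif_pos hj2]
            have := hxy ⟨j, by omega⟩
            rwa [dif_pos hj2] at this
          · have hjk : (j : ℕ) = k := by omega
            simp only [dif_neg hj2, dif_pos hjk]
            exact q.1.2
        · rw [dif_neg hj]
          dsimp only
          rw [dif_neg (by omega : ¬ (j : ℕ) < k), dif_neg (by omega : ¬ (j : ℕ) = k)]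
          exact (q.2 ⟨(j : ℕ) - k - 1, by omega⟩).2
      · -- invFun condition 2
        intro j h
        exact dif_pos h
      · -- invFun condition 3
        intro j h
        simp only [dif_pos (show (j : ℕ) < k by omega)]
      · -- left inverse
        intro p
        apply Subtype.ext
        dsimp only
        refine Prod.ext (funext fun j => ?_) (funext fun j => ?_)
        · by_cases hj : (j : ℕ) < k
          · simp only [dif_pos hj]
            exact (p.2.2.1 j hj).symm
          · simp only [dif_neg hj]
            exact congrArg _ (Fin.ext (show k = (j : ℕ) by omega) :
              (⟨k, by omega⟩ : Fin (k + 1)) = j)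
        · by_cases hj : (j : ℕ) < k
          · simp only [dif_pos hj]
            exact (p.2.2.2 j (by omega)).symm
          · by_cases hj2 : (j : ℕ) = k
            · simp only [dif_neg hj, dif_pos hj2]
              exact congrArg _ (Fin.ext (show k = (j : ℕ) by omega) :
                (⟨k, by omega⟩ : Fin (ℓ (k + 1))) = j)
            · simp only [dif_neg hj, dif_neg hj2]
              exact congrArg _ (Fin.ext (show k + 1 + ((j : ℕ) - k - 1) = (j : ℕ) by omega) :
                (⟨k + 1 + ((j : ℕ) - k - 1), by omega⟩ : Fin (ℓ (k + 1))) = j)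
      · -- right inverse
        intro q
        refine Prod.ext (Subtype.ext (Prod.ext ?_ ?_)) (funext fun i => Subtype.ext ?_)
        · simp only [dif_neg (lt_irrefl k)]
        · simp only [dif_neg (lt_irrefl k), dif_pos (Eq.refl k)]
          exact dif_pos trivial
        · simp only [dif_neg (by omega : ¬ k + 1 + (i : ℕ) < k),
            dif_neg (by omega : ¬ k + 1 + (i : ℕ) = k)]
          exact congrArg (fun t => ((q.2 t : Fin m)))
            (Fin.ext (show k + 1 + (i : ℕ) - k - 1 = (i : ℕ) by omega) :
            (⟨k + 1 + (i : ℕ) - k - 1, by omega⟩ : Fin (ℓ (k + 1) - k - 1)) = i)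
    · rw [Nat.card_prod, Nat.card_eq_finsetCard, Nat.card_fun, Nat.card_eq_finsetCard,
        Nat.card_eq_fintype_card, Fintype.card_fin, ← hs]
      congr 2
      omega
end
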